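/- Let H = (V, E) be a hypergraph of rank 2, i.e. every edge has size at most 2. Then Client has a winning strategy in the Client-Waiter game on H if and only if H has an edge of size at most 1, or H has two distinct edges that share a common vertex. -/

import Mathlib

variable {α : Type*} [DecidableEq α]

lemma card_sdiff_pair_lt {U : Finset α} {x y : α} (hx : x ∈ U) :
    (U \ {x, y}).card < U.card :=
  lt_of_le_of_lt
    (Finset.card_le_card (by
      intro a ha
      simp only [Finset.mem_sdiff, Finset.mem_insert, Finset.mem_singleton,
        Finset.mem_erase] at ha ⊢
      tauto))
    (Finset.card_erase_lt_of_mem hx)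

/-- Client-Waiter game played on the edge set `E`: Client has a winning strategy from the
position in which `U` is the set of unclaimed vertices and `C` is the set of vertices already
claimed by Client.  While at least two vertices are unclaimed, Waiter offers two distinct
unclaimed vertices `x, y`; Client claims one of them and Waiter gets the other.  A last
remaining unclaimed vertex goes to Client.  Client wins if at the end his vertices contain an
edge of `E`. -/
def CWClientWins (E : Set (Finset α)) (U C : Finset α) : Prop :=
  if _h : 2 ≤ U.card then
    ∀ x ∈ U, ∀ y ∈ U, x ≠ y →
      CWClientWins E (U \ {x, y}) (insert x C) ∨ CWClientWins E (U \ {x, y}) (insert y C)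
  else ∃ e ∈ E, e ⊆ C ∪ U
termination_by U.card
decreasing_by all_goals exact card_sdiff_pair_lt (by assumption)

lemma client_wins_of_owned {E : Set (Finset α)} (e : Finset α) (he : e ∈ E)
    (U C : Finset α) (hsub : e ⊆ C) : CWClientWins E U C := by
  rw [CWClientWins]
  split
  · intro x hx y hy hxy
    exact Or.inl (client_wins_of_owned e he _ _ (hsub.trans (Finset.subset_insert _ _)))
  · exact ⟨e, he, hsub.trans Finset.subset_union_left⟩
termination_by U.card
decreasing_by exact card_sdiff_pair_lt hx

lemma client_wins_singleton {E : Set (Finset α)} {v : α} (he : ({v} : Finset α) ∈ E)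
    (U C : Finset α) (hv : v ∈ C ∪ U) : CWClientWins E U C := by
  rw [CWClientWins]
  split
  · intro x hx y hy hxy
    by_cases hvy : v = y
    · exact Or.inr (client_wins_singleton he _ _ (by simp [hvy]))
    · refine Or.inl (client_wins_singleton he _ _ ?_)
      rcases Finset.mem_union.1 hv with h | h
      · exact Finset.mem_union_left _ (Finset.mem_insert_of_mem h)
      · by_cases hvx : v = x
        · exact Finset.mem_union_left _ (by simp [hvx])
        · exact Finset.mem_union_right _ (by simp [Finset.mem_sdiff, h, hvx, hvy])
  · exact ⟨{v}, he, by simpa using hv⟩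
termination_by U.card
decreasing_by all_goals exact card_sdiff_pair_lt hx

lemma client_wins_of_card_le_one {E : Set (Finset α)} {e : Finset α} (he : e ∈ E)
    (hc : e.card ≤ 1) (U C : Finset α) (hsub : e ⊆ C ∪ U) : CWClientWins E U C := by
  interval_cases h : e.card
  · rw [Finset.card_eq_zero] at h
    exact client_wins_of_owned e he U C (h ▸ Finset.empty_subset C)
  · rw [Finset.card_eq_one] at h
    obtain ⟨v, rfl⟩ := h
    exact client_wins_singleton he U C (by simpa using hsub)

/-- Invariant maintained by Client when chasing two edges `{v,a}` and `{v,b}`. -/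
def CWInv (v a b : α) (U C : Finset α) : Prop :=
  (v ∈ C ∧ (a ∈ C ∪ U ∨ b ∈ C ∪ U)) ∨ ((a ∈ C ∨ b ∈ C) ∧ v ∈ C ∪ U) ∨
    (v ∈ U ∧ a ∈ U ∧ b ∈ U)

lemma client_wins_pair {E : Set (Finset α)} {v a b : α}
    (hva : v ≠ a) (hvb : v ≠ b) (hab : a ≠ b)
    (he1 : ({v, a} : Finset α) ∈ E) (he2 : ({v, b} : Finset α) ∈ E)
    (U C : Finset α) (hI : CWInv v a b U C) : CWClientWins E U C := by
  rw [CWClientWins]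
  split
  case isTrue h2 =>
    intro x hx y hy hxy
    have key : CWInv v a b (U \ {x, y}) (insert x C) ∨
        CWInv v a b (U \ {x, y}) (insert y C) := by
      have mU : ∀ w : α, w ∈ U → w ≠ x → w ≠ y → w ∈ U \ {x, y} := by
        intro w hw h1 h3; simp [Finset.mem_sdiff, hw, h1, h3]
      have mCU : ∀ (z : α) (w : α), w ∈ C → w ∈ insert z C ∪ U \ {x, y} := by
        intro z w hw; exact Finset.mem_union_left _ (Finset.mem_insert_of_mem hw)
      have mUU : ∀ (z : α) (w : α), w ∈ U → w ≠ x → w ≠ y → w ∈ insert z C ∪ U \ {x, y} := by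
        intro z w hw h1 h3; exact Finset.mem_union_right _ (mU w hw h1 h3)
      have mz : ∀ (z : α), z ∈ insert z C ∪ U \ {x, y} :=
        fun z => Finset.mem_union_left _ (Finset.mem_insert_self z C)
      rcases hI with ⟨hvC, hor⟩ | ⟨hC, hv⟩ | ⟨hvU, haU, hbU⟩
      · -- Client already has v; needs one of a, b alive.
        rcases hor with h | h
        all_goals rcases Finset.mem_union.1 h with hC' | hU'
        · exact Or.inl (Or.inl ⟨Finset.mem_insert_of_mem hvC, Or.inl (mCU x a hC')⟩)
        · by_cases hax : a = x
          · exact Or.inl (Or.inl ⟨Finset.mem_insert_of_mem hvC, Or.inl (hax ▸ mz x)⟩)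
          · by_cases hay : a = y
            · exact Or.inr (Or.inl ⟨Finset.mem_insert_of_mem hvC, Or.inl (hay ▸ mz y)⟩)
            · exact Or.inl (Or.inl ⟨Finset.mem_insert_of_mem hvC,
                Or.inl (mUU x a hU' hax hay)⟩)
        · exact Or.inl (Or.inl ⟨Finset.mem_insert_of_mem hvC, Or.inr (mCU x b hC')⟩)
        · by_cases hbx : b = x
          · exact Or.inl (Or.inl ⟨Finset.mem_insert_of_mem hvC, Or.inr (hbx ▸ mz x)⟩)
          · by_cases hby : b = y
            · exact Or.inr (Or.inl ⟨Finset.mem_insert_of_mem hvC, Or.inr (hby ▸ mz y)⟩)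
            · exact Or.inl (Or.inl ⟨Finset.mem_insert_of_mem hvC,
                Or.inr (mUU x b hU' hbx hby)⟩)
      · -- Client has a or b; needs v alive.
        have hC' : ∀ z : α, a ∈ insert z C ∨ b ∈ insert z C := by
          rcases hC with h | h
          · exact fun z => Or.inl (Finset.mem_insert_of_mem h)
          · exact fun z => Or.inr (Finset.mem_insert_of_mem h)
        rcases Finset.mem_union.1 hv with hvC | hvU
        · exact Or.inl (Or.inr (Or.inl ⟨hC' x, mCU x v hvC⟩))
        · by_cases hvx : v = x
          · exact Or.inl (Or.inr (Or.inl ⟨hC' x, hvx ▸ mz x⟩))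
          · by_cases hvy : v = y
            · exact Or.inr (Or.inr (Or.inl ⟨hC' y, hvy ▸ mz y⟩))
            · exact Or.inl (Or.inr (Or.inl ⟨hC' x, mUU x v hvU hvx hvy⟩))
      · -- all of v, a, b are unclaimed.
        by_cases hvx : v = x
        · -- take v = x; one of a, b survives
          subst hvx
          refine Or.inl (Or.inl ⟨Finset.mem_insert_self v C, ?_⟩)
          by_cases hay : a = y
          · exact Or.inr (mUU v b hbU (fun h => hvb h.symm) (fun h => hab (h.trans hay.symm).symm))
          · exact Or.inl (mUU v a haU (fun h => hva h.symm) hay)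
        · by_cases hvy : v = y
          · subst hvy
            refine Or.inr (Or.inl ⟨Finset.mem_insert_self v C, ?_⟩)
            by_cases hax : a = x
            · exact Or.inr (mUU v b hbU (fun h => hab (h.trans hax.symm).symm) (fun h => hvb h.symm))
            · exact Or.inl (mUU v a haU hax (fun h => hva h.symm))
          · -- v not offered; grab a or b if offered, else anything
            have hvU' : v ∈ U \ {x, y} := mU v hvU hvx hvy
            by_cases hax : a = x
            · exact Or.inl (Or.inr (Or.inl ⟨Or.inl (hax ▸ Finset.mem_insert_self x C),
                Finset.mem_union_right _ hvU'⟩))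
            · by_cases hay : a = y
              · exact Or.inr (Or.inr (Or.inl ⟨Or.inl (hay ▸ Finset.mem_insert_self y C),
                  Finset.mem_union_right _ hvU'⟩))
              · by_cases hbx : b = x
                · exact Or.inl (Or.inr (Or.inl ⟨Or.inr (hbx ▸ Finset.mem_insert_self x C),
                    Finset.mem_union_right _ hvU'⟩))
                · by_cases hby : b = y
                  · exact Or.inr (Or.inr (Or.inl ⟨Or.inr (hby ▸ Finset.mem_insert_self y C),
                      Finset.mem_union_right _ hvU'⟩))
                  · exact Or.inl (Or.inr (Or.inr ⟨hvU', mU a haU hax hay, mU b hbU hbx hby⟩))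
    rcases key with k | k
    · exact Or.inl (client_wins_pair hva hvb hab he1 he2 _ _ k)
    · exact Or.inr (client_wins_pair hva hvb hab he1 he2 _ _ k)
  case isFalse h2 =>
    rcases hI with ⟨hvC, hor⟩ | ⟨hC, hv⟩ | ⟨hvU, haU, hbU⟩
    · rcases hor with h | h
      · exact ⟨{v, a}, he1, by
          intro w hw; rcases Finset.mem_insert.1 hw with rfl | hw
          · exact Finset.mem_union_left _ hvC
          · exact (Finset.mem_singleton.1 hw) ▸ h⟩
      · exact ⟨{v, b}, he2, by
          intro w hw; rcases Finset.mem_insert.1 hw with rfl | hw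
          · exact Finset.mem_union_left _ hvC
          · exact (Finset.mem_singleton.1 hw) ▸ h⟩
    · rcases hC with h | h
      · exact ⟨{v, a}, he1, by
          intro w hw; rcases Finset.mem_insert.1 hw with rfl | hw
          · exact hv
          · exact (Finset.mem_singleton.1 hw) ▸ Finset.mem_union_left _ h⟩
      · exact ⟨{v, b}, he2, by
          intro w hw; rcases Finset.mem_insert.1 hw with rfl | hw
          · exact hv
          · exact (Finset.mem_singleton.1 hw) ▸ Finset.mem_union_left _ h⟩
    · exfalso
      have hsub : ({v, a, b} : Finset α) ⊆ U := by
        intro w hw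
        rcases Finset.mem_insert.1 hw with rfl | hw
        · exact hvU
        · rcases Finset.mem_insert.1 hw with rfl | hw
          · exact haU
          · exact (Finset.mem_singleton.1 hw) ▸ hbU
      have h3 : ({v, a, b} : Finset α).card = 3 := by
        rw [Finset.card_insert_of_notMem (by simp [hva, hvb]),
          Finset.card_insert_of_notMem (by simp [hab]), Finset.card_singleton]
      have := Finset.card_le_card hsub
      omega
termination_by U.card
decreasing_by all_goals exact card_sdiff_pair_lt hx

lemma waiter_wins {E : Set (Finset α)} (hcard : ∀ e ∈ E, e.card = 2)
    (hdisj : ∀ e₁ ∈ E, ∀ e₂ ∈ E, e₁ ≠ e₂ → e₁ ∩ e₂ = ∅)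
    (U C : Finset α)
    (hinv : ∀ e ∈ E, (e ⊆ U ∧ e ∩ C = ∅) ∨ ∃ w ∈ e, w ∉ C ∪ U) :
    ¬ CWClientWins E U C := by
  rw [CWClientWins]
  split
  case isTrue h2 =>
    intro hcw
    by_cases hfresh : ∃ e ∈ E, e ⊆ U ∧ e ∩ C = ∅
    · obtain ⟨e, he, heU, heC⟩ := hfresh
      obtain ⟨x, y, hxy, rfl⟩ := Finset.card_eq_two.1 (hcard e he)
      have hx : x ∈ U := heU (Finset.mem_insert_self x {y})
      have hy : y ∈ U := heU (Finset.mem_insert_of_mem (Finset.mem_singleton_self y))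
      have dead_pres : ∀ (z w : α), z ∈ U → w ∉ C ∪ U → w ∉ insert z C ∪ U \ {x, y} := by
        intro z w hzU hw h
        rcases Finset.mem_union.1 h with h | h
        · rcases Finset.mem_insert.1 h with rfl | h
          · exact hw (Finset.mem_union_right _ hzU)
          · exact hw (Finset.mem_union_left _ h)
        · exact hw (Finset.mem_union_right _ (Finset.mem_sdiff.1 h).1)
      have hxC : x ∉ C := fun h => by
        have : x ∈ ({x, y} : Finset α) ∩ C :=
          Finset.mem_inter.2 ⟨Finset.mem_insert_self x {y}, h⟩
        rw [heC] at this; exact absurd this (Finset.notMem_empty x)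
      have hyC : y ∉ C := fun h => by
        have : y ∈ ({x, y} : Finset α) ∩ C :=
          Finset.mem_inter.2 ⟨Finset.mem_insert_of_mem (Finset.mem_singleton_self y), h⟩
        rw [heC] at this; exact absurd this (Finset.notMem_empty y)
      have hinv' : ∀ z ∈ ({x, y} : Finset α), ∀ f ∈ E,
          (f ⊆ U \ {x, y} ∧ f ∩ insert z C = ∅) ∨ ∃ w ∈ f, w ∉ insert z C ∪ U \ {x, y} := by
        intro z hz f hf
        have hzU : z ∈ U := heU hz
        have hzxy : z = x ∨ z = y := by
          rcases Finset.mem_insert.1 hz with h | h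
          · exact Or.inl h
          · exact Or.inr (Finset.mem_singleton.1 h)
        by_cases hfe : f = {x, y}
        · subst hfe
          right
          rcases hzxy with rfl | rfl
          · refine ⟨y, Finset.mem_insert_of_mem (Finset.mem_singleton_self y), fun h => ?_⟩
            rcases Finset.mem_union.1 h with h | h
            · rcases Finset.mem_insert.1 h with h | h
              · exact hxy h.symm
              · exact hyC h
            · exact (Finset.mem_sdiff.1 h).2
                (Finset.mem_insert_of_mem (Finset.mem_singleton_self y))
          · refine ⟨x, Finset.mem_insert_self x _, fun h => ?_⟩
            rcases Finset.mem_union.1 h with h | h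
            · rcases Finset.mem_insert.1 h with h | h
              · exact hxy h
              · exact hxC h
            · exact (Finset.mem_sdiff.1 h).2 (Finset.mem_insert_self x _)
        · have hdf : f ∩ ({x, y} : Finset α) = ∅ := hdisj f hf _ he hfe
          have hno : ∀ w ∈ f, w ∉ ({x, y} : Finset α) := by
            intro w hw h
            have : w ∈ f ∩ ({x, y} : Finset α) := Finset.mem_inter.2 ⟨hw, h⟩
            rw [hdf] at this; exact absurd this (Finset.notMem_empty w)
          rcases hinv f hf with ⟨hfU, hfC⟩ | ⟨w, hwf, hw⟩
          · left
            have hfC' : ∀ w ∈ f, w ∉ C := by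
              intro w hw h
              have : w ∈ f ∩ C := Finset.mem_inter.2 ⟨hw, h⟩
              rw [hfC] at this; exact absurd this (Finset.notMem_empty w)
            constructor
            · intro w hw
              exact Finset.mem_sdiff.2 ⟨hfU hw, hno w hw⟩
            · refine Finset.eq_empty_iff_forall_notMem.2 fun w hw => ?_
              obtain ⟨hwf, hwC⟩ := Finset.mem_inter.1 hw
              rcases Finset.mem_insert.1 hwC with rfl | h
              · exact hno w hwf hz
              · exact hfC' w hwf h
          · exact Or.inr ⟨w, hwf, dead_pres z w hzU hw⟩
      rcases hcw x hx y hy hxy with h | h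
      · exact waiter_wins hcard hdisj _ _
          (hinv' x (Finset.mem_insert_self x {y})) h
      · exact waiter_wins hcard hdisj _ _
          (hinv' y (Finset.mem_insert_of_mem (Finset.mem_singleton_self y))) h
    · push_neg at hfresh
      obtain ⟨x, hx, y, hy, hxy⟩ := Finset.one_lt_card.1 h2
      have dead_pres : ∀ (z w : α), z ∈ U → w ∉ C ∪ U → w ∉ insert z C ∪ U \ {x, y} := by
        intro z w hzU hw h
        rcases Finset.mem_union.1 h with h | h
        · rcases Finset.mem_insert.1 h with rfl | h
          · exact hw (Finset.mem_union_right _ hzU)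
          · exact hw (Finset.mem_union_left _ h)
        · exact hw (Finset.mem_union_right _ (Finset.mem_sdiff.1 h).1)
      have hinv' : ∀ z : α, z ∈ U → ∀ f ∈ E,
          (f ⊆ U \ {x, y} ∧ f ∩ insert z C = ∅) ∨ ∃ w ∈ f, w ∉ insert z C ∪ U \ {x, y} := by
        intro z hzU f hf
        rcases hinv f hf with ⟨hfU, hfC⟩ | ⟨w, hwf, hw⟩
        · exact absurd hfC (Finset.nonempty_iff_ne_empty.1 (hfresh f hf hfU))
        · exact Or.inr ⟨w, hwf, dead_pres z w hzU hw⟩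
      rcases hcw x hx y hy hxy with h | h
      · exact waiter_wins hcard hdisj _ _ (hinv' x hx) h
      · exact waiter_wins hcard hdisj _ _ (hinv' y hy) h
  case isFalse h2 =>
    rintro ⟨e, he, hsub⟩
    rcases hinv e he with ⟨heU, -⟩ | ⟨w, hwf, hw⟩
    · have := Finset.card_le_card heU
      rw [hcard e he] at this
      omega
    · exact hw (hsub hwf)
termination_by U.card
decreasing_by all_goals exact card_sdiff_pair_lt hx

lemma pair_of_mem_card_two {e : Finset α} {v : α} (he : e.card = 2) (hv : v ∈ e) :
    ∃ a, v ≠ a ∧ e = {v, a} := by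
  obtain ⟨c, d, hcd, rfl⟩ := Finset.card_eq_two.1 he
  rcases Finset.mem_insert.1 hv with rfl | hv
  · exact ⟨d, hcd, rfl⟩
  · rw [Finset.mem_singleton] at hv; subst hv
    exact ⟨c, fun h => hcd h.symm, Finset.pair_comm c v⟩

/-- In a rank-`2` hypergraph `H = (V, E)`, Client has a winning strategy in the Client-Waiter
game if and only if `H` has an edge of size at most `1` or two distinct intersecting edges. -/
theorem cw_client_rank_two (V : Finset α) (E : Set (Finset α)) (hEV : ∀ e ∈ E, e ⊆ V)
    (hrank : ∀ e ∈ E, e.card ≤ 2) :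
    CWClientWins E V ∅ ↔
      (∃ e ∈ E, e.card ≤ 1) ∨ ∃ e₁ ∈ E, ∃ e₂ ∈ E, e₁ ≠ e₂ ∧ (e₁ ∩ e₂).Nonempty := by
  constructor
  · intro hcw
    by_contra hno
    push_neg at hno
    obtain ⟨h1, h2⟩ := hno
    refine waiter_wins (fun e he => ?_) (fun e₁ he₁ e₂ he₂ hne => ?_) V ∅
      (fun e he => Or.inl ⟨hEV e he, Finset.inter_empty e⟩) hcw
    · have := h1 e he
      have := hrank e he
      omega
    · exact h2 e₁ he₁ e₂ he₂ hne
  · rintro (⟨e, he, hc⟩ | ⟨e₁, he₁, e₂, he₂, hne, v, hv⟩)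
    · exact client_wins_of_card_le_one he hc V ∅
        ((hEV e he).trans Finset.subset_union_right)
    · obtain ⟨hv1, hv2⟩ := Finset.mem_inter.1 hv
      by_cases hc1 : e₁.card ≤ 1
      · exact client_wins_of_card_le_one he₁ hc1 V ∅
          ((hEV e₁ he₁).trans Finset.subset_union_right)
      · by_cases hc2 : e₂.card ≤ 1
        · exact client_wins_of_card_le_one he₂ hc2 V ∅
            ((hEV e₂ he₂).trans Finset.subset_union_right)
        · have hcard1 : e₁.card = 2 := by have := hrank e₁ he₁; omega
          have hcard2 : e₂.card = 2 := by have := hrank e₂ he₂; omega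
          obtain ⟨a, hva, rfl⟩ := pair_of_mem_card_two hcard1 hv1
          obtain ⟨b, hvb, rfl⟩ := pair_of_mem_card_two hcard2 hv2
          have hab : a ≠ b := fun h => hne (by rw [h])
          refine client_wins_pair hva hvb hab he₁ he₂ V ∅ (Or.inr (Or.inr ?_))
          exact ⟨hEV _ he₁ (Finset.mem_insert_self v {a}),
            hEV _ he₁ (Finset.mem_insert_of_mem (Finset.mem_singleton_self a)),
            hEV _ he₂ (Finset.mem_insert_of_mem (Finset.mem_singleton_self b))⟩
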